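/- For every natural number k, the number of pairs (p, q) of functions Fin k → {+1, −1} such that all partial sums of p are nonnegative, all partial sums of q are nonnegative, and the total sum of p equals the total sum of q, is equal to the Catalan number C_k = (1/(k+1))·binom(2k, k). -/

import Mathlib

open List DyckStep

namespace TLAux

/-- map ±1 integers to Dyck steps -/
def toSteps (l : List ℤ) : List DyckStep := l.map (fun x => if x = 1 then U else D)
/-- map Dyck steps to ±1 integers -/
def ofSteps (l : List DyckStep) : List ℤ := l.map (fun s => if s = U then 1 else -1)
/-- reverse and negate -/
def negFlip (l : List ℤ) : List ℤ := (l.reverse).map (fun x => -x)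

lemma ofSteps_pm (l : List DyckStep) : ∀ x ∈ ofSteps l, x = 1 ∨ x = -1 := by
  intro x hx
  simp only [ofSteps, mem_map] at hx
  obtain ⟨s, -, rfl⟩ := hx
  cases s <;> simp

lemma toSteps_ofSteps (l : List DyckStep) : toSteps (ofSteps l) = l := by
  induction l with
  | nil => rfl
  | cons s t ih =>
    cases s <;> simp_all [toSteps, ofSteps]

lemma ofSteps_toSteps (l : List ℤ) (h : ∀ x ∈ l, x = 1 ∨ x = -1) : ofSteps (toSteps l) = l := by
  induction l with
  | nil => rfl
  | cons x t ih =>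
    rcases h x mem_cons_self with rfl | rfl <;>
      simp_all [toSteps, ofSteps, fun x hx => h x (mem_cons_of_mem _ hx)]

lemma count_sub_count (l : List DyckStep) :
    ((l.count U : ℤ) - l.count D) = (ofSteps l).sum := by
  induction l with
  | nil => rfl
  | cons s t ih =>
    cases s <;> simp [ofSteps, count_cons] at * <;> omega


lemma length_eq_counts (l : List DyckStep) : l.length = l.count U + l.count D := by
  induction l with
  | nil => rfl
  | cons s t ih => cases s <;> simp [count_cons, ih] <;> omega

lemma negFlip_pm (l : List ℤ) (h : ∀ x ∈ l, x = 1 ∨ x = -1) :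
    ∀ x ∈ negFlip l, x = 1 ∨ x = -1 := by
  intro x hx
  simp only [negFlip, mem_map, mem_reverse] at hx
  obtain ⟨y, hy, rfl⟩ := hx
  rcases h y hy with rfl | rfl <;> simp

lemma negFlip_length (l : List ℤ) : (negFlip l).length = l.length := by simp [negFlip]

lemma negFlip_sum (l : List ℤ) : (negFlip l).sum = -l.sum := by
  induction l with
  | nil => simp [negFlip]
  | cons x t ih => simp [negFlip] at *; omega

lemma negFlip_negFlip (l : List ℤ) : negFlip (negFlip l) = l := by
  simp [negFlip, map_reverse, map_map, Function.comp]

lemma sum_take_negFlip (l : List ℤ) (j : ℕ) :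
    ((negFlip l).take j).sum = (l.take (l.length - j)).sum - l.sum := by
  have h1 : (negFlip l).take j = negFlip (l.drop (l.length - j)) := by
    simp [negFlip, ← map_take, take_reverse]
  rw [h1, negFlip_sum]
  have := l.sum_take_add_sum_drop (l.length - j)
  omega

lemma sum_take_eq (l : List ℤ) (j : ℕ) :
    (l.take j).sum = ∑ i ∈ Finset.range l.length, if i < j then l.getD i 0 else 0 := by
  induction l generalizing j with
  | nil => simp
  | cons x t ih =>
    cases j with
    | zero => simp
    | succ j =>
      rw [take_succ_cons, sum_cons, ih j, length_cons, Finset.sum_range_succ']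
      simp [add_comm]

lemma getD_ofFn {k : ℕ} (p : Fin k → ℤ) (i : Fin k) :
    (List.ofFn p).getD (i : ℕ) 0 = p i := by
  rw [List.getD_eq_getElem?_getD, List.getElem?_ofFn]
  simp

lemma ofFn_getD {k : ℕ} (l : List ℤ) (h : l.length = k) :
    List.ofFn (fun i : Fin k => l.getD (i : ℕ) 0) = l := by
  apply List.ext_getElem
  · simp [h]
  · intro n h1 h2
    rw [List.getElem_ofFn, List.getD_eq_getElem]

lemma sum_take_pos_part (P Q : List ℤ) (i : ℕ) :
    ((P ++ negFlip Q).take i).sum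
      = (P.take i).sum + (Q.take (Q.length - (i - P.length))).sum - Q.sum := by
  rw [take_append, sum_append, sum_take_negFlip]
  ring

lemma sum_filter_eq_sum_take {k : ℕ} (p : Fin k → ℤ) (j : ℕ) :
    ∑ i ∈ Finset.univ.filter (fun i : Fin k => (i : ℕ) < j), p i
      = ((List.ofFn p).take j).sum := by
  rw [Finset.sum_filter, sum_take_eq, List.length_ofFn,
    ← Fin.sum_univ_eq_sum_range (fun i => if i < j then (List.ofFn p).getD i 0 else 0)]
  refine Finset.sum_congr rfl fun i _ => ?_
  rw [getD_ofFn]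


/-- counts of toSteps in terms of sums -/
lemma count_toSteps (l : List ℤ) (h : ∀ x ∈ l, x = 1 ∨ x = -1) :
    ((toSteps l).count U : ℤ) - (toSteps l).count D = l.sum := by
  rw [count_sub_count, ofSteps_toSteps l h]

section Main

variable {k : ℕ}

/-- forward: pair of good lists to a Dyck word -/
def mkWord (P Q : List ℤ) (hPl : P.length = k) (hQl : Q.length = k)
    (hP1 : ∀ x ∈ P, x = 1 ∨ x = -1) (hQ1 : ∀ x ∈ Q, x = 1 ∨ x = -1)
    (hPn : ∀ j, 0 ≤ (P.take j).sum) (hQn : ∀ j, 0 ≤ (Q.take j).sum)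
    (hs : P.sum = Q.sum) : DyckWord where
  toList := toSteps (P ++ negFlip Q)
  count_U_eq_count_D := by
    have h1 : ∀ x ∈ P ++ negFlip Q, x = 1 ∨ x = -1 := by
      intro x hx
      rcases mem_append.1 hx with h | h
      · exact hP1 x h
      · exact negFlip_pm Q hQ1 x h
    have := count_toSteps _ h1
    rw [sum_append, negFlip_sum, hs] at this
    omega
  count_D_le_count_U i := by
    have h1 : ∀ x ∈ (P ++ negFlip Q).take i, x = 1 ∨ x = -1 := by
      intro x hx
      rcases mem_append.1 (mem_of_mem_take hx) with h | h
      · exact hP1 x h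
      · exact negFlip_pm Q hQ1 x h
    have h2 := count_toSteps _ h1
    have h3 : 0 ≤ ((P ++ negFlip Q).take i).sum := by
      rcases le_or_gt i k with hik | hik
      · have : i - P.length = 0 := by omega
        rw [sum_take_pos_part, this]
        simp only [Nat.sub_zero, take_length]
        have := hPn i
        omega
      · have : P.take i = P := take_of_length_le (by omega)
        rw [sum_take_pos_part, this, hs]
        have := hQn (Q.length - (i - P.length))
        omega
    simp only [toSteps] at h2 ⊢
    rw [← map_take]
    omega

lemma mkWord_semilength (P Q : List ℤ) (hPl : P.length = k) (hQl : Q.length = k)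
    (hP1) (hQ1) (hPn) (hQn) (hs) :
    (mkWord P Q hPl hQl hP1 hQ1 hPn hQn hs).semilength = k := by
  have h1 : ∀ x ∈ P ++ negFlip Q, x = 1 ∨ x = -1 := fun x hx =>
    (mem_append.1 hx).elim (hP1 x) (negFlip_pm Q hQ1 x)
  have h2 := count_toSteps _ h1
  have h3 := length_eq_counts (toSteps (P ++ negFlip Q))
  have h4 : (toSteps (P ++ negFlip Q)).length = k + k := by
    simp [toSteps, negFlip_length, hPl, hQl]
  have h5 : (P ++ negFlip Q).sum = 0 := by rw [sum_append, negFlip_sum, hs]; ring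
  rw [h5] at h2
  show (toSteps (P ++ negFlip Q)).count U = k
  omega

/-- backward: the integer list of a Dyck word -/
def wList (w : DyckWord) : List ℤ := ofSteps w.toList

lemma wList_pm (w : DyckWord) : ∀ x ∈ wList w, x = 1 ∨ x = -1 := ofSteps_pm _

lemma wList_sum (w : DyckWord) : (wList w).sum = 0 := by
  have h := count_sub_count w.toList
  rw [w.count_U_eq_count_D] at h
  show (ofSteps w.toList).sum = 0
  omega

lemma wList_take_nonneg (w : DyckWord) (j : ℕ) : 0 ≤ ((wList w).take j).sum := by
  have h := count_sub_count (w.toList.take j)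
  have h2 := w.count_D_le_count_U j
  show 0 ≤ ((ofSteps w.toList).take j).sum
  simp only [ofSteps, ← map_take] at *
  omega

lemma wList_length (w : DyckWord) (hw : w.semilength = k) : (wList w).length = 2 * k := by
  have h1 := length_eq_counts w.toList
  have h2 := w.count_U_eq_count_D
  simp only [DyckWord.semilength] at hw
  show (ofSteps w.toList).length = 2 * k
  simp only [ofSteps, length_map]
  omega

lemma sum_take_drop (l : List ℤ) (n m : ℕ) :
    ((l.drop n).take m).sum = (l.take (n + m)).sum - (l.take n).sum := by
  rw [take_add, sum_append]; ring

lemma wList_mkWord (P Q : List ℤ) (hPl : P.length = k) (hQl : Q.length = k)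
    (hP1 : ∀ x ∈ P, x = 1 ∨ x = -1) (hQ1 : ∀ x ∈ Q, x = 1 ∨ x = -1)
    (hPn : ∀ j, 0 ≤ (P.take j).sum) (hQn : ∀ j, 0 ≤ (Q.take j).sum)
    (hs : P.sum = Q.sum) :
    wList (mkWord P Q hPl hQl hP1 hQ1 hPn hQn hs) = P ++ negFlip Q :=
  ofSteps_toSteps _ (fun x hx => (mem_append.1 hx).elim (hP1 x) (negFlip_pm Q hQ1 x))

variable (k) in
/-- The main equivalence. -/
def mainEquiv : {pq : (Fin k → ℤ) × (Fin k → ℤ) //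
      (∀ i, pq.1 i = 1 ∨ pq.1 i = -1) ∧
      (∀ i, pq.2 i = 1 ∨ pq.2 i = -1) ∧
      (∀ j : ℕ, 0 ≤ ∑ i ∈ Finset.univ.filter (fun i : Fin k => (i : ℕ) < j), pq.1 i) ∧
      (∀ j : ℕ, 0 ≤ ∑ i ∈ Finset.univ.filter (fun i : Fin k => (i : ℕ) < j), pq.2 i) ∧
      (∑ i, pq.1 i = ∑ i, pq.2 i)} ≃ {w : DyckWord // w.semilength = k} where
  toFun x :=
    ⟨mkWord (List.ofFn x.1.1) (List.ofFn x.1.2) (by simp) (by simp)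
      (fun y hy => by obtain ⟨i, rfl⟩ := mem_ofFn.1 hy; exact x.2.1 i)
      (fun y hy => by obtain ⟨i, rfl⟩ := mem_ofFn.1 hy; exact x.2.2.1 i)
      (fun j => by rw [← sum_filter_eq_sum_take]; exact x.2.2.2.1 j)
      (fun j => by rw [← sum_filter_eq_sum_take]; exact x.2.2.2.2.1 j)
      (by rw [sum_ofFn, sum_ofFn]; exact x.2.2.2.2.2),
     mkWord_semilength _ _ _ _ _ _ _ _ _⟩
  invFun y :=
    ⟨(fun i => ((wList y.1).take k).getD (i : ℕ) 0,
      fun i => (negFlip ((wList y.1).drop k)).getD (i : ℕ) 0), by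
      obtain ⟨w, hw⟩ := y
      have hlen := wList_length w hw
      have hPlen : ((wList w).take k).length = k := by rw [length_take]; omega
      have hQlen : (negFlip ((wList w).drop k)).length = k := by
        rw [negFlip_length, length_drop]; omega
      have hP1 : ∀ y ∈ (wList w).take k, y = 1 ∨ y = -1 :=
        fun y hy => wList_pm w y (mem_of_mem_take hy)
      have hQ1 : ∀ y ∈ negFlip ((wList w).drop k), y = 1 ∨ y = -1 :=
        negFlip_pm _ (fun y hy => wList_pm w y (mem_of_mem_drop hy))
      have getDP : ∀ i : Fin k, ((wList w).take k).getD (i : ℕ) 0 ∈ (wList w).take k := by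
        intro i
        rw [List.getD_eq_getElem _ _ (by rw [hPlen]; exact i.isLt)]
        exact List.getElem_mem _
      have getDQ : ∀ i : Fin k,
          (negFlip ((wList w).drop k)).getD (i : ℕ) 0 ∈ negFlip ((wList w).drop k) := by
        intro i
        rw [List.getD_eq_getElem _ _ (by rw [hQlen]; exact i.isLt)]
        exact List.getElem_mem _
      have hPof : List.ofFn (fun i : Fin k => ((wList w).take k).getD (i : ℕ) 0)
          = (wList w).take k := ofFn_getD _ hPlen
      have hQof : List.ofFn (fun i : Fin k => (negFlip ((wList w).drop k)).getD (i : ℕ) 0)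
          = negFlip ((wList w).drop k) := ofFn_getD _ hQlen
      have hsum := wList_sum w
      have hdropsum : ((wList w).drop k).sum = -((wList w).take k).sum := by
        have := (wList w).sum_take_add_sum_drop k
        omega
      refine ⟨fun i => hP1 _ (getDP i), fun i => hQ1 _ (getDQ i), ?_, ?_, ?_⟩
      · intro j
        rw [sum_filter_eq_sum_take, hPof, take_take]
        exact wList_take_nonneg w _
      · intro j
        rw [sum_filter_eq_sum_take, hQof, sum_take_negFlip, sum_take_drop, length_drop,
          hdropsum]
        have h1 := wList_take_nonneg w (k + ((wList w).length - k - j))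
        omega
      · rw [← sum_ofFn (f := fun i : Fin k => ((wList w).take k).getD (i : ℕ) 0),
          ← sum_ofFn (f := fun i : Fin k => (negFlip ((wList w).drop k)).getD (i : ℕ) 0),
          hPof, hQof, negFlip_sum, hdropsum, neg_neg]⟩
  left_inv x := by
    obtain ⟨⟨p, q⟩, hx⟩ := x
    apply Subtype.ext
    dsimp only
    rw [wList_mkWord]
    have e1 : (List.ofFn p ++ negFlip (List.ofFn q)).take k = List.ofFn p :=
      take_left' (by simp)
    have e2 : (List.ofFn p ++ negFlip (List.ofFn q)).drop k = negFlip (List.ofFn q) :=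
      drop_left' (by simp)
    simp only [e1, e2, negFlip_negFlip]
    exact Prod.ext (funext fun i => getD_ofFn p i) (funext fun i => getD_ofFn q i)
  right_inv y := by
    obtain ⟨w, hw⟩ := y
    have hlen := wList_length w hw
    apply Subtype.ext
    apply DyckWord.ext
    dsimp only [mkWord]
    rw [ofFn_getD _ (by rw [length_take]; omega),
      ofFn_getD _ (by rw [negFlip_length, length_drop]; omega), negFlip_negFlip,
      take_append_drop]
    exact toSteps_ofSteps w.toList

end Main

end TLAux

theorem dim_TL_eq_catalan (k : ℕ) :
    Nat.card {pq : (Fin k → ℤ) × (Fin k → ℤ) //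
      (∀ i, pq.1 i = 1 ∨ pq.1 i = -1) ∧
      (∀ i, pq.2 i = 1 ∨ pq.2 i = -1) ∧
      (∀ j : ℕ, 0 ≤ ∑ i ∈ Finset.univ.filter (fun i : Fin k => (i : ℕ) < j), pq.1 i) ∧
      (∀ j : ℕ, 0 ≤ ∑ i ∈ Finset.univ.filter (fun i : Fin k => (i : ℕ) < j), pq.2 i) ∧
      (∑ i, pq.1 i = ∑ i, pq.2 i)} = catalan k := by
  rw [Nat.card_congr (TLAux.mainEquiv k), Nat.card_eq_fintype_card,
    DyckWord.card_dyckWord_semilength_eq_catalan]
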